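/- Suppose G is abelian and L ≥ [H]^𝒪. Then the subposet of elements of [H]^𝒪 which transfer to L (under subgroup inclusion) has a maximum element, namely L ∩ H. -/
import Mathlib


/-- A transfer system on a group `G`: a partial order `rel` on subgroups refining the
subgroup relation, closed under conjugation and restriction. -/
structure TransferSystem (G : Type*) [Group G] where
  rel : Subgroup G → Subgroup G → Prop
  le_of_rel : ∀ {K H : Subgroup G}, rel K H → K ≤ H
  refl : ∀ H : Subgroup G, rel H H
  trans : ∀ {J K H : Subgroup G}, rel J K → rel K H → rel J H
  antisymm : ∀ {K H : Subgroup G}, rel K H → rel H K → K = H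
  conj : ∀ (g : G) {K H : Subgroup G}, rel K H →
    rel (K.map (MulAut.conj g).toMonoidHom) (H.map (MulAut.conj g).toMonoidHom)
  restrict : ∀ {K H L : Subgroup G}, rel K H → L ≤ H → rel (K ⊓ L) L

/-- Conjugate subgroup `gKg⁻¹`. -/
def conjSub {G : Type*} [Group G] (g : G) (K : Subgroup G) : Subgroup G :=
  K.map (MulAut.conj g).toMonoidHom

/-- `H_𝒪(J)`: the minimal subgroup containing `J` which transfers to `G` (the top subgroup). -/
noncomputable def HO {G : Type*} [Group G] (O : TransferSystem G) (J : Subgroup G) : Subgroup G :=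
  sInf {H : Subgroup G | O.rel H ⊤ ∧ J ≤ H}

/-- `J ∈ [H]^𝒪`: the inseparability class of `H`, i.e. `H_𝒪(J)` is conjugate to `H`. -/
def inClass {G : Type*} [Group G] (O : TransferSystem G) (H J : Subgroup G) : Prop :=
  ∃ g : G, conjSub g (HO O J) = H

/-- `J` and `K` are 𝒪-inseparable: `H_𝒪(J)` and `H_𝒪(K)` are conjugate. -/
def TSInseparable {G : Type*} [Group G] (O : TransferSystem G) (J K : Subgroup G) : Prop :=
  ∃ g : G, conjSub g (HO O J) = HO O K

lemma conjSub_comm {G : Type*} [CommGroup G] (g : G) (K : Subgroup G) :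
    conjSub g K = K := by
  ext x
  simp [conjSub, Subgroup.mem_map, MulAut.conj, mul_comm]

lemma le_HO {G : Type*} [Group G] (O : TransferSystem G) (J : Subgroup G) : J ≤ HO O J :=
  le_sInf fun _ hx => hx.2

lemma HO_mono {G : Type*} [Group G] (O : TransferSystem G) {J K : Subgroup G} (h : J ≤ K) :
    HO O J ≤ HO O K :=
  sInf_le_sInf fun x hx => ⟨hx.1, h.trans hx.2⟩

lemma HO_le {G : Type*} [Group G] (O : TransferSystem G) {J H : Subgroup G}
    (hH : O.rel H ⊤) (hJH : J ≤ H) : HO O J ≤ H :=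
  sInf_le ⟨hH, hJH⟩

/-- For abelian `G`, if `L` is above the class of `H`, then the elements of the class which
transfer to `L` have a maximum element, namely `L ⊓ H`. -/
theorem abelian_max_transferring {G : Type*} [CommGroup G] [Finite G] (O : TransferSystem G)
    {H L : Subgroup G} (hH : O.rel H ⊤)
    (habove : ∃ K : Subgroup G, inClass O H K ∧ K ≤ L) :
    inClass O H (L ⊓ H) ∧ O.rel (L ⊓ H) L ∧
      ∀ J : Subgroup G, inClass O H J → O.rel J L → J ≤ L ⊓ H := by
  obtain ⟨K, ⟨g, hg⟩, hKL⟩ := habove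
  rw [conjSub_comm] at hg
  have hKH : K ≤ H := hg ▸ le_HO O K
  have h1 : HO O (L ⊓ H) = H := by
    apply le_antisymm (HO_le O hH inf_le_right)
    calc H = HO O K := hg.symm
      _ ≤ HO O (L ⊓ H) := HO_mono O (le_inf hKL hKH)
  refine ⟨⟨1, by rw [conjSub_comm, h1]⟩, ?_, ?_⟩
  · have := O.restrict hH (le_top : L ≤ ⊤)
    rwa [inf_comm] at this
  · intro J ⟨g', hg'⟩ hJL
    rw [conjSub_comm] at hg'
    exact le_inf (O.le_of_rel hJL) (hg' ▸ le_HO O J)
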